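/- For all n ≥ 0, the Catalan number satisfies C_{n+1} = \sum_{k=0}^{n} binom(n, k) * M_k, where M_k is the k-th Motzkin number. -/

import Mathlib

open Finset

lemma hsHockey (q : ℕ) (m : ℕ) : ∑ a ∈ range m, a.choose q = m.choose (q+1) := by
  induction m with
  | zero => simp
  | succ m ih =>
    rw [sum_range_succ, ih]
    exact (Nat.choose_succ_succ m q).symm ▸ (Nat.add_comm _ _)

lemma keyVdm (q m : ℕ) : ∀ p, ∑ a ∈ range (m+1), a.choose p * (m - a).choose q
    = (m+1).choose (p+q+1) := by
  induction m with
  | zero =>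
    intro p
    rcases p with _ | p
    · rcases q with _ | q
      · simp
      · rw [Nat.choose_eq_zero_of_lt (show 1 < 0+(q+1)+1 by omega)]; simp
    · rw [Nat.choose_eq_zero_of_lt (show 1 < p+1+q+1 by omega)]; simp
  | succ m ih =>
    intro p
    rw [sum_range_succ' (fun a => a.choose p * (m + 1 - a).choose q)]
    simp only [Nat.succ_sub_succ, Nat.sub_zero]
    rcases p with _ | p
    · simp only [Nat.choose_zero_right, one_mul]
      rw [show (∑ a ∈ range (m+1), (m - a).choose q) = ∑ a ∈ range (m+1), (m+1-1-a).choose q by norm_num,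
        sum_range_reflect (fun a => a.choose q) (m+1), hsHockey]
      have e2 : (m+1+1).choose (0+q+1) = (m+1).choose q + (m+1).choose (q+1) := by
        rw [zero_add]; exact Nat.choose_succ_succ (m+1) q
      omega
    · have e1 : ∀ a : ℕ, (a+1).choose (p+1) = a.choose p + a.choose (p+1) :=
        fun a => Nat.choose_succ_succ a p
      simp only [e1, add_mul, sum_add_distrib, ih p, ih (p+1)]
      have e2 : (m+1+1).choose (p+1+q+1) = (m+1).choose (p+q+1) + (m+1).choose (p+1+q+1) := by
        rw [show p+1+q+1 = (p+q+1)+1 by omega]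
        exact Nat.choose_succ_succ (m+1) (p+q+1)
      have e3 : Nat.choose 0 (p+1) = 0 := Nat.choose_eq_zero_of_lt (by omega)
      rw [e2, e3]; omega

lemma keyVdm' (m p q : ℕ) : ∑ a ∈ range m, a.choose p * (m-1-a).choose q
    = m.choose (p+q+1) := by
  cases m with
  | zero => simp
  | succ m => simpa using keyVdm q m p
open Finset

lemma triReindex (f : ℕ → ℕ → ℕ) (m : ℕ) (hf : ∀ p q, m ≤ p + q → f p q = 0) :
    ∑ p ∈ range (m+1), ∑ q ∈ range (m+1), f p q
      = ∑ j ∈ range m, ∑ i ∈ range (j+1), f i (j-i) := by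
  rw [← Finset.sum_product' (s := range (m+1)) (t := range (m+1)) (f := fun p q => f p q)]
  have hsub : ((range (m+1)) ×ˢ (range (m+1))).filter (fun x => x.1 + x.2 < m)
      ⊆ (range (m+1)) ×ˢ (range (m+1)) := filter_subset _ _
  rw [← Finset.sum_subset hsub (by
    rintro ⟨p, q⟩ hx hnx
    simp only [mem_filter, mem_product, mem_range] at hx hnx
    exact hf p q (by omega))]
  have hset : ((range (m+1)) ×ˢ (range (m+1))).filter (fun x => x.1 + x.2 < m)
      = (range m).biUnion (fun j => Finset.HasAntidiagonal.antidiagonal j) := by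
    ext ⟨p, q⟩
    simp only [mem_filter, mem_product, mem_range, mem_biUnion, Finset.HasAntidiagonal.mem_antidiagonal]
    constructor
    · rintro ⟨⟨_, _⟩, h⟩; exact ⟨p + q, h, rfl⟩
    · rintro ⟨j, hj, rfl⟩; omega
  rw [hset, Finset.sum_biUnion (by
    intro a ha b hb hab
    simp only [Finset.disjoint_left]
    rintro ⟨p, q⟩ hp hq
    simp only [Finset.HasAntidiagonal.mem_antidiagonal] at hp hq
    exact hab (hp ▸ hq))]
  exact Finset.sum_congr rfl fun j _ =>
    Finset.Nat.sum_antidiagonal_eq_sum_range_succ_mk _ j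

lemma convLemma (M : ℕ → ℕ) (m : ℕ) :
    ∑ a ∈ range m, (∑ p ∈ range (a+1), a.choose p * M p) *
        (∑ q ∈ range (m-1-a+1), (m-1-a).choose q * M q)
      = ∑ j ∈ range m, m.choose (j+1) * ∑ i ∈ range (j+1), M i * M (j-i) := by
  have extend : ∀ b : ℕ, b < m → (∑ p ∈ range (b+1), b.choose p * M p)
      = ∑ p ∈ range (m+1), b.choose p * M p := fun b hb => by
    refine Finset.sum_subset (Finset.range_subset_range.2 (by omega)) ?_
    intro p _ hp
    simp only [mem_range, not_lt] at hp
    rw [Nat.choose_eq_zero_of_lt (by omega), zero_mul]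
  have step1 : ∀ a ∈ range m,
      (∑ p ∈ range (a+1), a.choose p * M p) *
        (∑ q ∈ range (m-1-a+1), (m-1-a).choose q * M q)
      = ∑ p ∈ range (m+1), ∑ q ∈ range (m+1),
          (a.choose p * M p) * ((m-1-a).choose q * M q) := by
    intro a ha
    simp only [mem_range] at ha
    rw [extend a ha, extend (m-1-a) (by omega), Finset.sum_mul_sum]
  rw [Finset.sum_congr rfl step1, Finset.sum_comm]
  have step2 : ∀ p ∈ range (m+1),
      (∑ a ∈ range m, ∑ q ∈ range (m+1), (a.choose p * M p) * ((m-1-a).choose q * M q))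
      = ∑ q ∈ range (m+1), M p * M q * m.choose (p+q+1) := by
    intro p _
    rw [Finset.sum_comm]
    refine Finset.sum_congr rfl fun q _ => ?_
    calc ∑ a ∈ range m, (a.choose p * M p) * ((m-1-a).choose q * M q)
        = (M p * M q) * ∑ a ∈ range m, a.choose p * (m-1-a).choose q := by
          rw [Finset.mul_sum]; exact Finset.sum_congr rfl fun a _ => by ring
      _ = M p * M q * m.choose (p+q+1) := by rw [keyVdm']
  rw [Finset.sum_congr rfl step2,
    triReindex (fun p q => M p * M q * m.choose (p+q+1)) m
      (fun p q h => by show M p * M q * m.choose (p+q+1) = 0; rw [Nat.choose_eq_zero_of_lt (by omega), mul_zero])]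
  refine Finset.sum_congr rfl fun j hj => ?_
  rw [Finset.mul_sum]
  refine Finset.sum_congr rfl fun i hi => ?_
  simp only [mem_range] at hi
  rw [show i + (j - i) + 1 = j + 1 by omega]
  ring

lemma A_succ (M : ℕ → ℕ) (h0 : M 0 = 1)
    (hrec : ∀ n, M (n + 1) = M n + ∑ k ∈ Finset.range n, M k * M (n - 1 - k)) (m : ℕ) :
    ∑ k ∈ range (m+2), (m+1).choose k * M k
      = 2 * (∑ k ∈ range (m+1), m.choose k * M k)
        + ∑ a ∈ range m, (∑ p ∈ range (a+1), a.choose p * M p) *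
            (∑ q ∈ range (m-1-a+1), (m-1-a).choose q * M q) := by
  have h1 : ∑ k ∈ range (m+2), (m+1).choose k * M k
      = ∑ k ∈ range (m+1), (m+1).choose (k+1) * M (k+1) + 1 := by
    rw [sum_range_succ' (fun k => (m+1).choose k * M k) (m+1)]
    simp [h0]
  have h2 : ∑ k ∈ range (m+1), (m+1).choose (k+1) * M (k+1)
      = ∑ k ∈ range (m+1), m.choose k * M (k+1)
        + ∑ k ∈ range (m+1), m.choose (k+1) * M (k+1) := by
    rw [← sum_add_distrib]
    exact Finset.sum_congr rfl fun k _ => by rw [Nat.choose_succ_succ, add_mul]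
  have hS2 : ∑ k ∈ range (m+1), m.choose (k+1) * M (k+1) + 1
      = ∑ k ∈ range (m+1), m.choose k * M k := by
    have h := sum_range_succ' (fun k => m.choose k * M k) (m+1)
    rw [sum_range_succ (fun k => m.choose k * M k) (m+1)] at h
    simp only [Nat.choose_succ_self, zero_mul, add_zero, Nat.choose_zero_right, one_mul, h0] at h
    omega
  have h3 : ∑ k ∈ range (m+1), m.choose k * M (k+1)
      = ∑ k ∈ range (m+1), m.choose k * M k
        + ∑ k ∈ range (m+1), m.choose k * ∑ i ∈ range k, M i * M (k-1-i) := by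
    rw [← sum_add_distrib]
    exact Finset.sum_congr rfl fun k _ => by rw [hrec k, mul_add]
  have h4 : ∑ k ∈ range (m+1), m.choose k * ∑ i ∈ range k, M i * M (k-1-i)
      = ∑ j ∈ range m, m.choose (j+1) * ∑ i ∈ range (j+1), M i * M (j-i) := by
    rw [sum_range_succ' (fun k => m.choose k * ∑ i ∈ range k, M i * M (k-1-i)) m]
    simp only [Nat.add_sub_cancel, range_zero, sum_empty, mul_zero, add_zero]
  rw [h1, h2, h3, h4, ← convLemma M m]
  omega




/-- If M satisfies the Motzkin recurrence, then C_{n+1} = ∑_{k=0}^{n} C(n,k) * M k. -/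
theorem catalan_succ_eq_sum_choose_motzkin (M : ℕ → ℕ) (h0 : M 0 = 1)
    (hrec : ∀ n, M (n + 1) = M n + ∑ k ∈ Finset.range n, M k * M (n - 1 - k)) :
    ∀ n, catalan (n + 1) = ∑ k ∈ Finset.range (n + 1), n.choose k * M k := by
  intro n
  induction n using Nat.strong_induction_on with
  | _ n ih =>
    match n with
    | 0 => simp [h0, catalan]
    | (m+1) =>
      rw [catalan_succ', Finset.Nat.sum_antidiagonal_eq_sum_range_succ_mk]
      have step : ∑ k ∈ range (m+1+1), catalan k * catalan (m+1-k)
          = ∑ i ∈ range m, catalan (i+1) * catalan (m-i)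
            + catalan (m+1) + catalan (m+1) := by
        rw [sum_range_succ' (fun k => catalan k * catalan (m+1-k)) (m+1)]
        simp only [Nat.succ_sub_succ, catalan_zero, one_mul, mul_one, Nat.sub_zero]
        rw [sum_range_succ (fun k => catalan (k+1) * catalan (m-k)) m]
        simp only [Nat.sub_self, catalan_zero, mul_one]
      rw [step]
      have hmain : ∀ i ∈ range m, catalan (i+1) * catalan (m-i)
          = (∑ p ∈ range (i+1), i.choose p * M p)
            * (∑ q ∈ range (m-1-i+1), (m-1-i).choose q * M q) := by
        intro i hi
        simp only [mem_range] at hi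
        rw [ih i (by omega), show m - i = (m-1-i)+1 by omega, ih (m-1-i) (by omega)]
      rw [Finset.sum_congr rfl hmain, ih m (by omega), A_succ M h0 hrec m]
      omega
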